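/- Let x ∈ ℕ and let α be an x-lean ordinal in Cantor normal form below ε₀ (all coefficients at every exponent level are ≤ x). Then for every ordinal γ in CNF: α < γ if and only if α ⊑_x P_x(γ), and also if and only if α ⊏_x γ, and also if and only if α ≤ P_x(γ). -/

import Mathlib

/-- Ordinal terms below ε₀: a term is a list of exponents,
`cons β γ` denoting ω^β + γ. -/
inductive OT : Type
  | nil : OT
  | cons : OT → OT → OT
deriving DecidableEq

namespace OT

/-- The term 1 = ω^0. -/
def one : OT := cons nil nil

/-- Syntactic concatenation (direct sum) of ordinal terms. -/
def add : OT → OT → OT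
  | nil, b => b
  | cons e r, b => cons e (add r b)

/-- A term ω^{β₁}+...+ω^{β_m} is a successor iff m > 0 and β_m = 0. -/
def isSucc : OT → Bool
  | nil => false
  | cons e nil => e == nil
  | cons _ (cons e r) => isSucc (cons e r)

/-- Remove the last summand ω^0 of a successor term. -/
def pred : OT → OT
  | nil => nil
  | cons _ nil => nil
  | cons e (cons e' r) => cons e (pred (cons e' r))

/-- Limit terms. -/
def isLim (a : OT) : Prop := a ≠ nil ∧ isSucc a = false

/-- ω^β · n as an ordinal term. -/
def rep : ℕ → OT → OT
  | 0, _ => nil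
  | n + 1, β => cons β (rep n β)

/-- The standard assignment of fundamental sequences (with ω_x = x+1):
(γ+ω^{β+1})_x = γ+ω^β·(x+1) and (γ+ω^λ)_x = γ+ω^{λ_x}. -/
def fseq : OT → ℕ → OT
  | nil, _ => nil
  | cons β nil, x =>
      if β = nil then nil
      else if isSucc β then rep (x + 1) (pred β)
      else cons (fseq β x) nil
  | cons β (cons e r), x => cons β (fseq (cons e r) x)

/-- Syntactic ordering of terms (on CNF terms this is the ordinal ordering). -/
def lt : OT → OT → Prop
  | _, nil => False
  | nil, cons _ _ => True
  | cons a r, cons b s => lt a b ∨ (a = b ∧ lt r s)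

def le (a b : OT) : Prop := lt a b ∨ a = b

/-- Cantor normal form: exponents weakly decreasing, all in CNF. -/
def isCNF : OT → Prop
  | nil => True
  | cons b nil => isCNF b
  | cons b (cons e r) => isCNF b ∧ le e b ∧ isCNF (cons e r)

/-- Number of occurrences of the exponent β in a term. -/
def count (β : OT) : OT → ℕ
  | nil => 0
  | cons b r => (if b = β then 1 else 0) + count β r

/-- k-lean: every coefficient (at every level) is ≤ k. -/
def leanOrd (k : ℕ) : OT → Prop
  | nil => True
  | cons b r => count b (cons b r) ≤ k ∧ leanOrd k b ∧ leanOrd k r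

end OT

/-- Pointwise-at-x ordering: smallest transitive relation with
α ⊏_x α+1 and λ_x ⊏_x λ. -/
inductive Ptw (x : ℕ) : OT → OT → Prop
  | succ (a : OT) : Ptw x a (OT.add a OT.one)
  | lim (l : OT) : OT.isLim l → Ptw x (OT.fseq l x) l
  | trans {a b c : OT} : Ptw x a b → Ptw x b c → Ptw x a c

namespace OT

theorem lt_nil (a : OT) : ¬ lt a nil := by cases a <;> simp [lt]

theorem nil_lt (e r : OT) : lt nil (cons e r) := by simp [lt]

theorem lt_cons_iff {a b r s : OT} :
    lt (cons a r) (cons b s) ↔ (lt a b ∨ (a = b ∧ lt r s)) := Iff.rfl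

theorem lt_trans' : ∀ a b c : OT, lt a b → lt b c → lt a c
  | _, b, nil, _, hbc => absurd hbc (lt_nil b)
  | nil, _, cons c1 c2, _, _ => nil_lt c1 c2
  | cons _ _, nil, cons _ _, hab, _ => absurd hab (lt_nil _)
  | cons a1 a2, cons b1 b2, cons c1 c2, hab, hbc => by
      rcases hab with h | ⟨rfl, h⟩ <;> rcases hbc with h' | ⟨rfl, h'⟩
      · exact Or.inl (lt_trans' a1 b1 c1 h h')
      · exact Or.inl h
      · exact Or.inl h'
      · exact Or.inr ⟨rfl, lt_trans' a2 b2 c2 h h'⟩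

theorem lt_irrefl' : ∀ a : OT, ¬ lt a a
  | nil => fun h => h
  | cons e r => fun h => h.elim (lt_irrefl' e) (fun h => lt_irrefl' r h.2)

theorem lt_of_le_of_lt' {a b c : OT} (h : le a b) (h' : lt b c) : lt a c :=
  h.elim (fun h => lt_trans' _ _ _ h h') (fun e => e ▸ h')

theorem lt_of_lt_of_le' {a b c : OT} (h : lt a b) (h' : le b c) : lt a c :=
  h'.elim (fun h' => lt_trans' _ _ _ h h') (fun e => e ▸ h)

theorem le_trans' {a b c : OT} (h : le a b) (h' : le b c) : le a c :=
  h'.elim (fun h' => Or.inl (lt_of_le_of_lt' h h')) (fun e => e ▸ h)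

theorem lt_add_one' : ∀ a : OT, lt a (add a one)
  | nil => by simp [add, one, lt]
  | cons e r => Or.inr ⟨rfl, lt_add_one' r⟩

theorem pred_lt : ∀ b : OT, isSucc b = true → lt (pred b) b
  | cons e nil, h => by
      simp [isSucc] at h; subst h; simp [pred, lt]
  | cons e (cons e' r), h =>
      Or.inr ⟨rfl, pred_lt (cons e' r) (by simpa [isSucc] using h)⟩

theorem succ_add_pred : ∀ b : OT, isSucc b = true → add (pred b) one = b
  | cons e nil, h => by simp [isSucc] at h; subst h; rfl
  | cons e (cons e' r), h => by
      show cons e (add (pred (cons e' r)) one) = cons e (cons e' r)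
      rw [succ_add_pred (cons e' r) (by simpa [isSucc] using h)]

theorem cnf_exp : ∀ {e r : OT}, isCNF (cons e r) → isCNF e
  | _, nil, h => h
  | _, cons _ _, h => h.1

theorem cnf_tail : ∀ {e r : OT}, isCNF (cons e r) → isCNF r
  | _, nil, _ => trivial
  | _, cons _ _, h => h.2.2

theorem pred_cnf : ∀ b : OT, isCNF b → isCNF (pred b)
  | nil, _ => trivial
  | cons _ nil, _ => trivial
  | cons e (cons e' r), h => by
      have hq := pred_cnf (cons e' r) (cnf_tail h)
      show isCNF (cons e (pred (cons e' r)))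
      rcases r with _ | ⟨e'', r'⟩
      · show isCNF e; exact cnf_exp h
      · exact ⟨h.1, h.2.1, hq⟩

theorem rep_cnf : ∀ (n : ℕ) (β : OT), isCNF β → isCNF (rep n β)
  | 0, _, _ => trivial
  | 1, β, h => h
  | n + 2, β, h => ⟨h, Or.inr rfl, rep_cnf (n + 1) β h⟩

theorem count_rep : ∀ (n : ℕ) (p : OT), count p (rep n p) = n
  | 0, _ => rfl
  | n + 1, p => by simp [rep, count, count_rep n p]; omega

theorem lim_exp_ne_nil {β r : OT} (h : isLim (cons β r)) (hr : r = nil) : β ≠ nil := by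
  intro hβ; subst hβ; subst hr; simpa [isSucc] using h.2

theorem lim_tail {β e r : OT} (h : isLim (cons β (cons e r))) : isLim (cons e r) :=
  ⟨fun hh => OT.noConfusion hh, by simpa [isSucc] using h.2⟩

theorem fseq_single_succ {β : OT} {x : ℕ} (hβ : β ≠ nil) (hs : isSucc β = true) :
    fseq (cons β nil) x = rep (x + 1) (pred β) := by simp [fseq, hβ, hs]

theorem fseq_single_lim {β : OT} {x : ℕ} (hβ : β ≠ nil) (hs : isSucc β = false) :
    fseq (cons β nil) x = cons (fseq β x) nil := by simp [fseq, hβ, hs]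

theorem fseq_cons_cons {β e r : OT} {x : ℕ} :
    fseq (cons β (cons e r)) x = cons β (fseq (cons e r) x) := rfl

theorem fseq_lt (x : ℕ) : ∀ l : OT, isLim l → lt (fseq l x) l
  | nil, h => absurd rfl h.1
  | cons β nil, h => by
      have hβ : β ≠ nil := lim_exp_ne_nil h rfl
      by_cases hs : isSucc β = true
      · rw [fseq_single_succ hβ hs]
        exact Or.inl (pred_lt β hs)
      · rw [fseq_single_lim hβ (by simpa using hs)]
        exact Or.inl (fseq_lt x β ⟨hβ, by simpa using hs⟩)
  | cons β (cons e r), h => by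
      rw [fseq_cons_cons]
      exact Or.inr ⟨rfl, fseq_lt x (cons e r) (lim_tail h)⟩

theorem fseq_ne_nil (x : ℕ) : ∀ l : OT, isLim l → fseq l x ≠ nil
  | nil, h => absurd rfl h.1
  | cons β nil, h => by
      have hβ : β ≠ nil := lim_exp_ne_nil h rfl
      by_cases hs : isSucc β = true
      · rw [fseq_single_succ hβ hs]; exact fun h => OT.noConfusion h
      · rw [fseq_single_lim hβ (by simpa using hs)]; exact fun h => OT.noConfusion h
  | cons β (cons e r), _ => by
      rw [fseq_cons_cons]; exact fun h => OT.noConfusion h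

theorem fseq_cnf (x : ℕ) : ∀ l : OT, isLim l → isCNF l → isCNF (fseq l x)
  | nil, h, _ => absurd rfl h.1
  | cons β nil, h, hc => by
      have hβ : β ≠ nil := lim_exp_ne_nil h rfl
      by_cases hs : isSucc β = true
      · rw [fseq_single_succ hβ hs]
        exact rep_cnf (x + 1) (pred β) (pred_cnf β hc)
      · rw [fseq_single_lim hβ (by simpa using hs)]
        exact fseq_cnf x β ⟨hβ, by simpa using hs⟩ hc
  | cons β (cons e r), h, hc => by
      rw [fseq_cons_cons]
      have htl : isLim (cons e r) := lim_tail h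
      have hfc := fseq_cnf x (cons e r) htl hc.2.2
      have hflt := fseq_lt x (cons e r) htl
      rcases hF : fseq (cons e r) x with _ | ⟨h', t'⟩
      · exact absurd hF (fseq_ne_nil x _ htl)
      · rw [hF] at hfc hflt
        have hle : le h' e := hflt.imp id And.left
        exact ⟨hc.1, le_trans' hle hc.2.1, hfc⟩

theorem fseq_not_lean (x : ℕ) : ∀ l : OT, isLim l → ¬ leanOrd x (fseq l x)
  | nil, h, _ => absurd rfl h.1
  | cons β nil, h, hl => by
      have hβ : β ≠ nil := lim_exp_ne_nil h rfl
      by_cases hs : isSucc β = true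
      · rw [fseq_single_succ hβ hs] at hl
        have : count (pred β) (cons (pred β) (rep x (pred β))) ≤ x := hl.1
        rw [show cons (pred β) (rep x (pred β)) = rep (x + 1) (pred β) from rfl,
          count_rep] at this
        omega
      · rw [fseq_single_lim hβ (by simpa using hs)] at hl
        exact fseq_not_lean x β ⟨hβ, by simpa using hs⟩ hl.2.1
  | cons β (cons e r), h, hl => by
      rw [fseq_cons_cons] at hl
      exact fseq_not_lean x (cons e r) (lim_tail h) hl.2.2

/-- `a < b + 1` implies `a ≤ b` (syntactically, for CNF `a`). -/
theorem lt_succ_le : ∀ b a : OT, isCNF a → isSucc b = true → lt a b → le a (pred b)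
  | cons e nil, a, _, hs, hab => by
      simp [isSucc] at hs; subst hs
      match a, hab with
      | nil, _ => exact Or.inr rfl
      | cons c r, hab => exact absurd hab (by
          rintro (h | ⟨rfl, h⟩)
          · exact lt_nil c h
          · exact lt_nil r h)
  | cons e (cons e' s), a, ha, hs, hab => by
      match a, hab with
      | nil, _ => exact Or.inl (nil_lt _ _)
      | cons c r, hab =>
        rcases hab with h | ⟨rfl, h⟩
        · exact Or.inl (Or.inl h)
        · rcases lt_succ_le (cons e' s) r (cnf_tail ha) (by simpa [isSucc] using hs) h with
            h' | h'
          · exact Or.inl (Or.inr ⟨rfl, h'⟩)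
          · exact Or.inr (by rw [h']; rfl)

theorem count_eq_zero : ∀ a p : OT, isCNF a → (∀ c r, a = cons c r → lt c p) →
    count p a = 0
  | nil, _, _, _ => rfl
  | cons c r, p, hc, hh => by
      have h1 : lt c p := hh c r rfl
      have hne : c ≠ p := fun e => lt_irrefl' p (e ▸ h1)
      simp only [count, if_neg hne, Nat.zero_add]
      refine count_eq_zero r p (cnf_tail hc) ?_
      rintro c' r' rfl
      exact lt_of_le_of_lt' hc.2.1 h1

theorem below_rep : ∀ (a c : OT) (n : ℕ), isCNF a → count c a < n →
    (∀ c' r, a = cons c' r → le c' c) → lt a (rep n c)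
  | nil, c, n, _, hn, _ => by
      match n, hn with
      | n + 1, _ => exact nil_lt _ _
  | cons c' r, c, n, hcnf, hn, hhead => by
      match n, hn with
      | n + 1, hn =>
        rcases hhead c' r rfl with h | rfl
        · exact Or.inl h
        · refine Or.inr ⟨rfl, below_rep r c' n (cnf_tail hcnf) ?_ ?_⟩
          · simp [count] at hn
            omega
          · rintro c'' r'' rfl
            exact hcnf.2.1

/-- The crucial lemma: an x-lean α below a limit λ is ≤ λ_x. -/
theorem lean_lt_lim (x : ℕ) : ∀ l : OT, isLim l → isCNF l →
    ∀ a : OT, leanOrd x a → isCNF a → lt a l → le a (fseq l x)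
  | nil, hl, _, _, _, _, _ => absurd rfl hl.1
  | cons β nil, hl, hc, a, hlean, hacnf, hab => by
      have hβ : β ≠ nil := lim_exp_ne_nil hl rfl
      match a, hab with
      | nil, _ =>
        rcases hF : fseq (cons β nil) x with _ | ⟨h', t'⟩
        · exact absurd hF (fseq_ne_nil x _ hl)
        · exact Or.inl (nil_lt _ _)
      | cons c r, hab =>
        have hcβ : lt c β := by
          rcases hab with h | ⟨rfl, h⟩
          · exact h
          · exact absurd h (lt_nil r)
        by_cases hs : isSucc β = true
        · rw [fseq_single_succ hβ hs]
          refine Or.inl ?_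
          have hcp : le c (pred β) := lt_succ_le β c (cnf_exp hacnf) hs hcβ
          refine below_rep (cons c r) (pred β) (x + 1) hacnf ?_ ?_
          · rcases hcp with h | rfl
            · have : count (pred β) (cons c r) = 0 := by
                refine count_eq_zero _ _ hacnf ?_
                rintro c' r' he
                injection he with h1 h2
                subst h1
                exact h
              omega
            · have := hlean.1
              omega
          · rintro c' r' he
            injection he with h1 h2
            subst h1
            exact hcp
        · have hblim : isLim β := ⟨hβ, by simpa using hs⟩
          rw [fseq_single_lim hβ (by simpa using hs)]
          rcases lean_lt_lim x β hblim hc c hlean.2.1 (cnf_exp hacnf) hcβ with h | h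
          · exact Or.inl (Or.inl h)
          · exact absurd (h ▸ hlean.2.1) (fseq_not_lean x β hblim)
  | cons β (cons e r), hl, hc, a, hlean, hacnf, hab => by
      rw [fseq_cons_cons]
      have htl : isLim (cons e r) := lim_tail hl
      match a, hab with
      | nil, _ => exact Or.inl (nil_lt _ _)
      | cons c s, hab =>
        rcases hab with h | ⟨rfl, h⟩
        · exact Or.inl (Or.inl h)
        · rcases lean_lt_lim x (cons e r) htl hc.2.2 s hlean.2.2 (cnf_tail hacnf) h with
            h' | h'
          · exact Or.inl (Or.inr ⟨rfl, h'⟩)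
          · exact Or.inr (by rw [h'])

/-- Ordinal interpretation. -/
noncomputable def o : OT → Ordinal.{0}
  | nil => 0
  | cons e r => Ordinal.omega0 ^ (o e) + o r

def sz : OT → ℕ
  | nil => 1
  | cons e r => sz e + sz r + 1

mutual

theorem o_bound : ∀ e r : OT, isCNF (cons e r) →
    o (cons e r) < Ordinal.omega0 ^ (o e + 1)
  | e, nil, _ => by
      show Ordinal.omega0 ^ o e + o nil < _
      rw [show o nil = 0 from rfl, add_zero, Ordinal.add_one_eq_succ]
      exact (Ordinal.opow_lt_opow_iff_right Ordinal.one_lt_omega0).2 (Order.lt_succ _)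
  | e, cons e' r', h => by
      have h1 : o (cons e' r') < Ordinal.omega0 ^ (o e' + 1) := o_bound e' r' h.2.2
      have h2 : o e' ≤ o e := by
        rcases h.2.1 with hlt | hE
        · exact (o_mono e' e (cnf_exp h.2.2) h.1 hlt).le
        · exact hE ▸ le_rfl
      have h3 : o (cons e' r') < Ordinal.omega0 ^ (o e + 1) :=
        h1.trans_le (Ordinal.opow_le_opow_right Ordinal.omega0_pos
          (add_le_add h2 (le_refl 1)))
      have h4 : Ordinal.omega0 ^ o e < Ordinal.omega0 ^ (o e + 1) := by
        rw [Ordinal.add_one_eq_succ]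
        exact (Ordinal.opow_lt_opow_iff_right Ordinal.one_lt_omega0).2 (Order.lt_succ _)
      show Ordinal.omega0 ^ o e + o (cons e' r') < _
      exact (Ordinal.principal_add_omega0_opow _) h4 h3
  termination_by e r => sz e + sz r + 1
  decreasing_by all_goals (simp only [sz]; omega)

theorem o_mono : ∀ a b : OT, isCNF a → isCNF b → lt a b → o a < o b
  | nil, nil, _, _, h => absurd h (lt_nil nil)
  | cons _ _, nil, _, _, h => absurd h (lt_nil _)
  | nil, cons e s, _, _, _ => by
      show (0 : Ordinal) < Ordinal.omega0 ^ o e + o s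
      exact lt_of_lt_of_le (Ordinal.opow_pos _ Ordinal.omega0_pos) le_self_add
  | cons c r, cons e s, ha, hb, h => by
      rcases h with h | ⟨rfl, h⟩
      · have h1 : o (cons c r) < Ordinal.omega0 ^ (o c + 1) := o_bound c r ha
        have h2 : o c < o e := o_mono c e (cnf_exp ha) (cnf_exp hb) h
        have h3 : Ordinal.omega0 ^ (o c + 1) ≤ Ordinal.omega0 ^ o e := by
          refine Ordinal.opow_le_opow_right Ordinal.omega0_pos ?_
          rw [Ordinal.add_one_eq_succ]
          exact Order.succ_le_of_lt h2
        calc o (cons c r) < Ordinal.omega0 ^ (o c + 1) := h1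
          _ ≤ Ordinal.omega0 ^ o e := h3
          _ ≤ Ordinal.omega0 ^ o e + o s := le_self_add
      · show Ordinal.omega0 ^ o c + o r < Ordinal.omega0 ^ o c + o s
        exact (add_lt_add_iff_left _).2 (o_mono r s (cnf_tail ha) (cnf_tail hb) h)
  termination_by a b => sz a + sz b
  decreasing_by all_goals (simp only [sz]; omega)

end

theorem ptw_lt {x : ℕ} {a b : OT} (h : Ptw x a b) : lt a b := by
  induction h with
  | succ a => exact lt_add_one' a
  | lim l hl => exact fseq_lt x l hl
  | trans h1 h2 ih1 ih2 => exact lt_trans' _ _ _ ih1 ih2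

/-- Main lemma: x-lean CNF a below CNF g is pointwise below g. -/
theorem ptw_main (x : ℕ) : ∀ g : OT, isCNF g →
    ∀ a : OT, leanOrd x a → isCNF a → lt a g → Ptw x a g := by
  suffices H : ∀ i : Ordinal.{0}, ∀ g, o g = i → isCNF g →
      ∀ a, leanOrd x a → isCNF a → lt a g → Ptw x a g from
    fun g => H (o g) g rfl
  intro i
  induction i using Ordinal.induction with
  | _ i IH =>
    rintro g rfl hg a hl ha hlt
    rcases g with _ | ⟨e, r⟩
    · exact absurd hlt (lt_nil a)
    · by_cases hs : isSucc (cons e r) = true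
      · have hstep : Ptw x (pred (cons e r)) (cons e r) := by
          have h0 := Ptw.succ (x := x) (pred (cons e r))
          rwa [succ_add_pred _ hs] at h0
        rcases lt_succ_le (cons e r) a ha hs hlt with h | rfl
        · have hplt : lt (pred (cons e r)) (cons e r) := pred_lt _ hs
          have hdec : o (pred (cons e r)) < o (cons e r) :=
            o_mono _ _ (pred_cnf _ hg) hg hplt
          exact Ptw.trans (IH _ hdec _ rfl (pred_cnf _ hg) a hl ha h) hstep
        · exact hstep
      · have hlim : isLim (cons e r) := ⟨fun h => OT.noConfusion h, by simpa using hs⟩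
        have hstep : Ptw x (fseq (cons e r) x) (cons e r) := Ptw.lim _ hlim
        rcases lean_lt_lim x _ hlim hg a hl ha hlt with h | rfl
        · have hdec : o (fseq (cons e r) x) < o (cons e r) :=
            o_mono _ _ (fseq_cnf x _ hlim hg) hg (fseq_lt x _ hlim)
          exact Ptw.trans (IH _ hdec _ rfl (fseq_cnf x _ hlim hg) a hl ha h) hstep
        · exact hstep

end OT

open OT in
theorem P_facts (x : ℕ) (P : ℕ → OT → OT)
    (hPs : ∀ y b, OT.isSucc b = true → P y b = OT.pred b)
    (hPl : ∀ y b, OT.isLim b → P y b = P y (OT.fseq b y)) :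
    ∀ g : OT, isCNF g → g ≠ OT.nil →
      isCNF (P x g) ∧ lt (P x g) g ∧
        (∀ a, leanOrd x a → isCNF a → (lt a g ↔ le a (P x g))) := by
  suffices H : ∀ i : Ordinal.{0}, ∀ g, o g = i → isCNF g → g ≠ OT.nil →
      isCNF (P x g) ∧ lt (P x g) g ∧
        (∀ a, leanOrd x a → isCNF a → (lt a g ↔ le a (P x g))) from
    fun g => H (o g) g rfl
  intro i
  induction i using Ordinal.induction with
  | _ i IH =>
    rintro g rfl hg hne
    by_cases hs : isSucc g = true
    · rw [hPs x g hs]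
      refine ⟨pred_cnf g hg, pred_lt g hs, fun a hl ha => ?_⟩
      constructor
      · exact lt_succ_le g a ha hs
      · intro h
        exact lt_of_le_of_lt' h (pred_lt g hs)
    · have hlim : isLim g := ⟨hne, by simpa using hs⟩
      rw [hPl x g hlim]
      have hfc : isCNF (fseq g x) := fseq_cnf x g hlim hg
      have hflt : lt (fseq g x) g := fseq_lt x g hlim
      have hdec : o (fseq g x) < o g := o_mono _ _ hfc hg hflt
      obtain ⟨h1, h2, h3⟩ := IH _ hdec _ rfl hfc (fseq_ne_nil x g hlim)
      refine ⟨h1, lt_trans' _ _ _ h2 hflt, fun a hl ha => ?_⟩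
      rw [← h3 a hl ha]
      constructor
      · intro h
        rcases lean_lt_lim x g hlim hg a hl ha h with h' | h'
        · exact h'
        · exact absurd (h' ▸ hl) (fseq_not_lean x g hlim)
      · intro h
        exact lt_trans' _ _ _ h hflt

/-- For x-lean α in CNF and γ ≠ 0 in CNF:
α < γ iff α ⊑_x P_x(γ) iff α ⊏_x γ iff α ≤ P_x(γ). -/
theorem stmt18 (x : ℕ) (a : OT) (hlean : OT.leanOrd x a) (hcnf : OT.isCNF a)
    (P : ℕ → OT → OT)
    (hPs : ∀ y b, OT.isSucc b = true → P y b = OT.pred b)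
    (hPl : ∀ y b, OT.isLim b → P y b = P y (OT.fseq b y)) :
    ∀ g : OT, OT.isCNF g → g ≠ OT.nil →
      ((OT.lt a g ↔ (Ptw x a (P x g) ∨ a = P x g)) ∧
       (OT.lt a g ↔ Ptw x a g) ∧
       (OT.lt a g ↔ OT.le a (P x g))) := by
  intro g hg hne
  obtain ⟨h1, h2, h3⟩ := P_facts x P hPs hPl g hg hne
  have hiff3 : OT.lt a g ↔ OT.le a (P x g) := h3 a hlean hcnf
  refine ⟨?_, ⟨fun h => OT.ptw_main x g hg a hlean hcnf h, fun h => OT.ptw_lt h⟩, hiff3⟩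
  constructor
  · intro h
    rcases hiff3.1 h with h' | h'
    · exact Or.inl (OT.ptw_main x (P x g) h1 a hlean hcnf h')
    · exact Or.inr h'
  · rintro (h | h)
    · exact hiff3.2 (Or.inl (OT.ptw_lt h))
    · exact hiff3.2 (Or.inr h)
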